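/- If f(x) = ∑_{n∈ℤ} f̂(n) e^{inx} with |f̂(n)| ≤ c·q^{n^k} for some c > 0, 0 < q < 1 and integer k ≥ 1, then for every m ≥ 0, sup_x |f^{(m)}(x)| ≤ C·B^m·m^{m/k} for some constants C, B > 0 depending only on c, q, k. -/

import Mathlib

open Complex

lemma aux_core (r : ℝ) (k m p : ℕ) (hr0 : 0 < r) (hr1 : r < 1) (hk : 1 ≤ k)
    (hm : 1 ≤ m) (hp : 1 ≤ p) :
    (p : ℝ) ^ m * r ^ (p ^ k) ≤
      8 ^ m * (max 1 (-Real.log r)⁻¹) ^ (2 * m) * (m : ℝ) ^ ((m : ℝ) / k) := by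
  set al : ℝ := -Real.log r with hal_def
  have hal : 0 < al := by
    have := Real.log_neg hr0 hr1
    simp [hal_def]; linarith
  set A : ℝ := max 1 al⁻¹ with hA_def
  have hA1 : (1 : ℝ) ≤ A := le_max_left _ _
  set j : ℕ := m / k + 1 with hj_def
  have hk0 : (0:ℝ) < k := by exact_mod_cast hk
  -- (m:ℝ)/k ≤ j
  have hmkj : (m : ℝ) / k ≤ (j : ℕ) := by
    rw [div_le_iff₀ hk0]
    have : m < k * j := Nat.lt_mul_div_succ m (by omega)
    have : (m:ℝ) ≤ k * j := by exact_mod_cast this.le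
    linarith
  have hp1 : (1:ℝ) ≤ (p:ℝ) := by exact_mod_cast hp
  set x : ℝ := (p : ℝ) ^ k with hx_def
  have hx1 : (1:ℝ) ≤ x := one_le_pow₀ hp1
  have hx0 : (0:ℝ) ≤ x := by linarith
  have step1 : (p : ℝ) ^ m ≤ x ^ j := by
    have h1 : (p:ℝ) ^ m = x ^ ((m:ℝ)/k) := by
      rw [hx_def, ← Real.rpow_natCast (p:ℝ) k, ← Real.rpow_mul (by linarith)]
      rw [mul_div_cancel₀ _ (ne_of_gt hk0)]
      rw [Real.rpow_natCast]
    rw [h1, ← Real.rpow_natCast x j]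
    exact Real.rpow_le_rpow_of_exponent_le hx1 hmkj
  -- step 2 : x^j ≤ j! / al^j * exp (al * x)
  have step2 : x ^ j ≤ (j.factorial : ℝ) / al ^ j * Real.exp (al * x) := by
    have := Real.pow_div_factorial_le_exp (x := al * x) (by positivity) j
    rw [mul_pow] at this
    rw [div_mul_eq_mul_div, le_div_iff₀ (by positivity)]
    have h := (div_le_iff₀ (by positivity : (0:ℝ) < (j.factorial:ℝ))).mp this
    calc x ^ j * al ^ j = al ^ j * x ^ j := mul_comm _ _
      _ ≤ Real.exp (al * x) * (j.factorial : ℝ) := h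
      _ = (j.factorial : ℝ) * Real.exp (al * x) := mul_comm _ _
  -- r ^ (p^k) = exp (-(al * x))
  have hrx : r ^ (p ^ k) = Real.exp (-(al * x)) := by
    have : r = Real.exp (-al) := by rw [hal_def, neg_neg, Real.exp_log hr0]
    rw [this, ← Real.exp_nat_mul]
    congr 1
    push_cast [hx_def]
    ring
  have key : (p : ℝ) ^ m * r ^ (p ^ k) ≤ (j.factorial : ℝ) * A ^ j := by
    rw [hrx]
    calc (p:ℝ) ^ m * Real.exp (-(al * x))
        ≤ ((j.factorial : ℝ) / al ^ j * Real.exp (al * x)) * Real.exp (-(al * x)) := by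
          apply mul_le_mul_of_nonneg_right (step1.trans step2) (Real.exp_pos _).le
      _ = (j.factorial : ℝ) / al ^ j := by
          rw [mul_assoc, ← Real.exp_add, add_neg_cancel, Real.exp_zero, mul_one]
      _ ≤ (j.factorial : ℝ) * A ^ j := by
          rw [div_eq_mul_inv, ← inv_pow]
          exact mul_le_mul_of_nonneg_left (pow_le_pow_left₀ (by positivity)
            (le_max_right 1 al⁻¹) j) (by positivity)
  -- bound j! ≤ 8^m * m^(m/k)  and A^j ≤ A^(2m)
  have hj2m : j ≤ 2 * m := by
    have : m / k ≤ m := Nat.div_le_self m k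
    omega
  have hfac : (j.factorial : ℝ) ≤ 8 ^ m * (m : ℝ) ^ ((m : ℝ) / k) := by
    have h1 : j.factorial ≤ j ^ j := Nat.factorial_le_pow j
    have h2 : j ^ j ≤ (2 * m) ^ j := Nat.pow_le_pow_left hj2m j
    have h4 : (2:ℕ) ^ j ≤ 2 ^ (2 * m) := Nat.pow_le_pow_right (by norm_num) hj2m
    have h5 : m ≤ 2 ^ m := Nat.le_of_lt (Nat.lt_two_pow_self (n := m))
    have hn : j.factorial ≤ 2 ^ (2 * m) * (m ^ (m / k) * 2 ^ m) := by
      calc j.factorial ≤ (2 * m) ^ j := h1.trans h2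
        _ = 2 ^ j * (m ^ (m / k) * m) := by rw [hj_def]; ring
        _ ≤ 2 ^ (2 * m) * (m ^ (m / k) * 2 ^ m) :=
            Nat.mul_le_mul h4 (Nat.mul_le_mul le_rfl h5)
    have hR : (j.factorial : ℝ) ≤ 2 ^ (2 * m) * ((m:ℝ) ^ (m / k : ℕ) * 2 ^ m) := by
      exact_mod_cast hn
    have hm1 : (1:ℝ) ≤ (m:ℝ) := by exact_mod_cast hm
    have hmono : (m:ℝ) ^ (m / k : ℕ) ≤ (m:ℝ) ^ ((m:ℝ) / k) := by
      rw [← Real.rpow_natCast (m:ℝ) (m/k)]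
      apply Real.rpow_le_rpow_of_exponent_le hm1
      exact_mod_cast Nat.cast_div_le
    calc (j.factorial : ℝ) ≤ 2 ^ (2 * m) * ((m:ℝ) ^ (m / k : ℕ) * 2 ^ m) := hR
      _ ≤ 2 ^ (2 * m) * ((m:ℝ) ^ ((m:ℝ) / k) * 2 ^ m) := by
          apply mul_le_mul_of_nonneg_left
            (mul_le_mul_of_nonneg_right hmono (by positivity)) (by positivity)
      _ = 8 ^ m * (m : ℝ) ^ ((m : ℝ) / k) := by
          rw [pow_mul, show (8:ℝ) = 4 * 2 by norm_num, mul_pow]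
          norm_num
          ring
  have hAj : A ^ j ≤ A ^ (2 * m) := pow_le_pow_right₀ hA1 hj2m
  calc (p : ℝ) ^ m * r ^ (p ^ k) ≤ (j.factorial : ℝ) * A ^ j := key
    _ ≤ (8 ^ m * (m : ℝ) ^ ((m : ℝ) / k)) * A ^ (2 * m) := by
        apply mul_le_mul hfac hAj (by positivity) (by positivity)
    _ = 8 ^ m * A ^ (2 * m) * (m : ℝ) ^ ((m : ℝ) / k) := by ring

set_option maxHeartbeats 1000000 in
/-- If `|f̂(n)| ≤ c q^{|n|^k}` with `0 < q < 1`, `k ≥ 1`, then the termwise `m`-th derivative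
`f^{(m)}(x) = ∑ (in)^m f̂(n) e^{inx}` satisfies `sup_x |f^{(m)}(x)| ≤ C B^m m^{m/k}` for
constants `C, B > 0` depending only on `c, q, k`. -/
theorem quasi_analytic_derivative_bound (c q : ℝ) (k : ℕ) (hc : 0 < c)
    (hq0 : 0 < q) (hq1 : q < 1) (hk : 1 ≤ k) (a : ℤ → ℂ)
    (ha : ∀ n : ℤ, ‖a n‖ ≤ c * q ^ (n.natAbs ^ k)) :
    ∃ C B : ℝ, 0 < C ∧ 0 < B ∧ ∀ (m : ℕ) (x : ℝ),
      ‖∑' n : ℤ, ((n : ℂ) * Complex.I) ^ m * a n * Complex.exp ((n : ℂ) * x * Complex.I)‖ ≤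
        C * B ^ m * (m : ℝ) ^ ((m : ℝ) / k) := by
  set r : ℝ := Real.sqrt q with hr_def
  have hr0 : 0 < r := Real.sqrt_pos.mpr hq0
  have hr1 : r < 1 := by
    rw [hr_def, show (1:ℝ) = Real.sqrt 1 by simp]
    exact Real.sqrt_lt_sqrt hq0.le hq1
  have hqr : q = r ^ 2 := (Real.sq_sqrt hq0.le).symm
  set A : ℝ := max 1 (-Real.log r)⁻¹ with hA_def
  have hA1 : (1:ℝ) ≤ A := le_max_left _ _
  set S : ℝ := 2 * (1 - r)⁻¹ with hS_def
  have hS0 : 0 < S := by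
    have h : (0:ℝ) < 1 - r := by linarith
    rw [hS_def]; positivity
  refine ⟨2 * c * S, 8 * A ^ 2, by positivity, by positivity, ?_⟩
  intro m x
  set D : ℝ := 8 ^ m * A ^ (2 * m) * (m : ℝ) ^ ((m : ℝ) / k) with hD_def
  have hA0 : (0:ℝ) ≤ A := le_trans zero_le_one hA1
  have hD0 : 0 ≤ D := by
    rw [hD_def]
    exact mul_nonneg (mul_nonneg (by positivity) (pow_nonneg hA0 _))
      (Real.rpow_nonneg (by positivity) _)
  -- the geometric majorant
  have hbound : ∀ n : ℤ, ‖((n : ℂ) * Complex.I) ^ m * a n *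
      Complex.exp ((n : ℂ) * x * Complex.I)‖ ≤ c * D * r ^ n.natAbs := by
    intro n
    have hexp : ‖Complex.exp ((n : ℂ) * x * Complex.I)‖ = 1 := by
      rw [Complex.norm_exp]
      simp [Complex.mul_re]
    have hnI : ‖(n : ℂ) * Complex.I‖ = (n.natAbs : ℝ) := by
      rw [norm_mul, Complex.norm_I, mul_one, Complex.norm_intCast,
        ← Int.cast_abs, Int.abs_eq_natAbs, Int.cast_natCast]
    have hnorm : ‖((n : ℂ) * Complex.I) ^ m * a n *
        Complex.exp ((n : ℂ) * x * Complex.I)‖ = (n.natAbs : ℝ) ^ m * ‖a n‖ := by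
      rw [norm_mul, norm_mul, norm_pow, hnI, hexp, mul_one]
    rw [hnorm]
    set p : ℕ := n.natAbs with hp_def
    have haq : ‖a n‖ ≤ c * q ^ (p ^ k) := ha n
    have hqrr : ∀ j : ℕ, q ^ j = r ^ j * r ^ j := by
      intro j; rw [hqr, sq, mul_pow]
    rcases Nat.eq_zero_or_pos m with hm0 | hm1
    · -- m = 0
      subst hm0
      have hD1 : D = 1 := by
        simp [hD_def]
      rw [hD1, pow_zero, one_mul, mul_one]
      calc ‖a n‖ ≤ c * q ^ (p ^ k) := haq
        _ = c * (r ^ (p ^ k) * r ^ (p ^ k)) := by rw [hqrr]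
        _ ≤ c * (1 * r ^ p) := by
            apply mul_le_mul_of_nonneg_left _ hc.le
            apply mul_le_mul (pow_le_one₀ hr0.le hr1.le)
              (pow_le_pow_of_le_one hr0.le hr1.le (Nat.le_self_pow (by omega) p))
              (by positivity) (by norm_num)
        _ = c * r ^ p := by rw [one_mul]
    · -- m ≥ 1
      rcases Nat.eq_zero_or_pos p with hp0 | hp1
      · rw [hp0]
        simp only [Nat.cast_zero, zero_pow (by omega : m ≠ 0), zero_mul, pow_zero, mul_one]
        positivity
      · have key := aux_core r k m p hr0 hr1 hk hm1 hp1
        calc (p:ℝ) ^ m * ‖a n‖ ≤ (p:ℝ) ^ m * (c * q ^ (p ^ k)) :=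
              mul_le_mul_of_nonneg_left haq (by positivity)
          _ = c * (((p:ℝ) ^ m * r ^ (p ^ k)) * r ^ (p ^ k)) := by rw [hqrr]; ring
          _ ≤ c * (D * r ^ p) := by
              apply mul_le_mul_of_nonneg_left _ hc.le
              apply mul_le_mul key
                (pow_le_pow_of_le_one hr0.le hr1.le (Nat.le_self_pow (by omega) p))
                (by positivity) hD0
          _ = c * D * r ^ p := by ring
  have hgeo : Summable (fun n : ℕ => r ^ n) := summable_geometric_of_lt_one hr0.le hr1
  have hnat : Summable (fun n : ℕ => r ^ ((n:ℤ)).natAbs) := by simpa using hgeo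
  have hneg : Summable (fun n : ℕ => r ^ (-(n:ℤ)).natAbs) := by simpa using hgeo
  have hgZ : Summable (fun n : ℤ => r ^ n.natAbs) := Summable.of_nat_of_neg hnat hneg
  have hgsum : Summable (fun n : ℤ => c * D * r ^ n.natAbs) := hgZ.mul_left _
  have hsum : Summable (fun n : ℤ => ‖((n : ℂ) * Complex.I) ^ m * a n *
      Complex.exp ((n : ℂ) * x * Complex.I)‖) :=
    Summable.of_nonneg_of_le (fun n => norm_nonneg _) hbound hgsum
  have htsumS : ∑' n : ℤ, r ^ n.natAbs ≤ S := by
    have hsnat : HasSum (fun n : ℕ => r ^ n) (1 - r)⁻¹ :=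
      hasSum_geometric_of_lt_one hr0.le hr1
    have h1 : HasSum (fun n : ℕ => r ^ ((n:ℤ)).natAbs) (1 - r)⁻¹ := by simpa using hsnat
    have h2 : HasSum (fun n : ℕ => r ^ (-(n:ℤ)).natAbs) (1 - r)⁻¹ := by simpa using hsnat
    have hZ : HasSum (fun n : ℤ => r ^ n.natAbs)
        ((1 - r)⁻¹ + (1 - r)⁻¹ - r ^ ((0:ℤ)).natAbs) := HasSum.of_nat_of_neg h1 h2
    rw [hZ.tsum_eq]
    have hinv : (0:ℝ) < (1 - r)⁻¹ := by
      have h : (0:ℝ) < 1 - r := by linarith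
      positivity
    simp only [Int.natAbs_zero, pow_zero]
    rw [hS_def]
    linarith
  calc ‖∑' n : ℤ, ((n : ℂ) * Complex.I) ^ m * a n * Complex.exp ((n : ℂ) * x * Complex.I)‖
      ≤ ∑' n : ℤ, ‖((n : ℂ) * Complex.I) ^ m * a n *
          Complex.exp ((n : ℂ) * x * Complex.I)‖ := norm_tsum_le_tsum_norm hsum
    _ ≤ ∑' n : ℤ, c * D * r ^ n.natAbs := Summable.tsum_le_tsum hbound hsum hgsum
    _ = c * D * ∑' n : ℤ, r ^ n.natAbs := tsum_mul_left
    _ ≤ c * D * S := mul_le_mul_of_nonneg_left htsumS (by positivity)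
    _ ≤ 2 * c * S * (8 * A ^ 2) ^ m * (m : ℝ) ^ ((m : ℝ) / k) := by
        have heq : 2 * c * S * (8 * A ^ 2) ^ m * (m : ℝ) ^ ((m : ℝ) / k)
            = 2 * (c * D * S) := by
          rw [hD_def, mul_pow, ← pow_mul]; ring
        have hpos : 0 ≤ c * D * S := by
          exact mul_nonneg (mul_nonneg hc.le hD0) hS0.le
        rw [heq]; linarith
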